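/- Let n ≥ 2, let F be a finite field, let P be a finite set of points in F^n, and let L be a finite set of lines in F^n. Let C₁ ≥ 1 and suppose L obeys the Wolff axiom with constant C₁: every 2-dimensional affine subspace of F^n contains at most C₁|F| lines of L. Then there is a constant C depending only on C₁ such that #{(p, ℓ) ∈ P × L : p ∈ ℓ} ≤ C (|P|^{1/2} |L|^{3/4} |F|^{1/4} + |P| + |L|). -/

import Mathlib

open scoped BigOperators

/-- A line in `F^n`: a one-dimensional affine subspace, i.e. `{a + t • b : t ∈ F}` with `b ≠ 0`. -/
def IsLine {F : Type*} [Field F] {n : ℕ} (ℓ : Set (Fin n → F)) : Prop :=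
  ∃ a b : Fin n → F, b ≠ 0 ∧ ℓ = {p | ∃ t : F, p = a + t • b}

/-- A 2-dimensional affine subspace (plane) in `F^n`. -/
def IsPlane {F : Type*} [Field F] {n : ℕ} (π : Set (Fin n → F)) : Prop :=
  ∃ a b c : Fin n → F, LinearIndependent F ![b, c] ∧
    π = {p | ∃ s t : F, p = a + s • b + t • c}

variable {F : Type*} [Field F] {n : ℕ}

-- a line through p with direction b
lemma line_through_pt {a b p : Fin n → F} (hp : p ∈ {x : Fin n → F | ∃ t : F, x = a + t • b}) :
    {x : Fin n → F | ∃ t : F, x = a + t • b} = {x | ∃ t : F, x = p + t • b} := by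
  obtain ⟨t₁, rfl⟩ := hp
  ext x
  constructor
  · rintro ⟨t, rfl⟩
    exact ⟨t - t₁, by module⟩
  · rintro ⟨t, rfl⟩
    exact ⟨t₁ + t, by module⟩

lemma line_dir_smul {b p : Fin n → F} {μ : F} (hμ : μ ≠ 0) :
    {x : Fin n → F | ∃ t : F, x = p + t • (μ • b)} = {x | ∃ t : F, x = p + t • b} := by
  ext x
  constructor
  · rintro ⟨t, rfl⟩
    exact ⟨t * μ, by module⟩
  · rintro ⟨t, rfl⟩
    exact ⟨t / μ, by rw [div_eq_mul_inv]; match_scalars <;> field_simp⟩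

/-- a line is determined by two distinct points on it -/
lemma line_two_pts {ℓ : Set (Fin n → F)} (hℓ : IsLine ℓ) {p q : Fin n → F}
    (hp : p ∈ ℓ) (hq : q ∈ ℓ) (hpq : p ≠ q) :
    ℓ = {x | ∃ t : F, x = p + t • (q - p)} := by
  obtain ⟨a, b, hb, rfl⟩ := hℓ
  rw [line_through_pt hp] at hq ⊢
  obtain ⟨t₂, ht₂⟩ := hq
  have ht₂0 : t₂ ≠ 0 := by
    rintro rfl
    simp at ht₂
    exact hpq ht₂.symm
  have : q - p = t₂ • b := by rw [ht₂]; module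
  rw [this, line_dir_smul ht₂0]

lemma line_inter_subsingleton {ℓ ℓ' : Set (Fin n → F)} (hℓ : IsLine ℓ) (hℓ' : IsLine ℓ')
    (hne : ℓ ≠ ℓ') {p q : Fin n → F} (hp : p ∈ ℓ) (hp' : p ∈ ℓ') (hq : q ∈ ℓ) (hq' : q ∈ ℓ') :
    p = q := by
  by_contra hpq
  exact hne ((line_two_pts hℓ hp hq hpq).trans (line_two_pts hℓ' hp' hq' hpq).symm)

lemma line_card_le [Fintype F] {ℓ : Set (Fin n → F)} (hℓ : IsLine ℓ)
    (A : Finset (Fin n → F)) [DecidablePred (· ∈ ℓ)] :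
    (A.filter (· ∈ ℓ)).card ≤ Fintype.card F := by
  classical
  obtain ⟨a, b, hb, rfl⟩ := hℓ
  calc (A.filter (· ∈ {p : Fin n → F | ∃ t : F, p = a + t • b})).card
      ≤ (Finset.univ.image (fun t : F => a + t • b)).card := by
        apply Finset.card_le_card
        intro x hx
        simp only [Finset.mem_filter, Set.mem_setOf_eq] at hx
        obtain ⟨t, rfl⟩ := hx.2
        exact Finset.mem_image.2 ⟨t, Finset.mem_univ t, rfl⟩
    _ ≤ Fintype.card F := by
        simpa using Finset.card_image_le (s := (Finset.univ : Finset F))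

section CNT
open Finset

variable {α β : Type*} [DecidableEq α] [DecidableEq β]

/-- greedy union bound: lines with ≥ a points, pairwise sharing ≤ 1 point -/
lemma greedy_union (pts : β → Finset α) (a m : ℕ)
    (S : Finset β)
    (hpts : ∀ ℓ ∈ S, a ≤ (pts ℓ).card)
    (hpair : ∀ ℓ ∈ S, ∀ ℓ' ∈ S, ℓ ≠ ℓ' → ((pts ℓ) ∩ (pts ℓ')).card ≤ 1) :
    min S.card m * (a - m) ≤ (S.biUnion pts).card := by
  classical
  induction S using Finset.induction_on with
  | empty => simp
  | @insert ℓ S hℓS ih =>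
    have hpts' : ∀ ℓ' ∈ S, a ≤ (pts ℓ').card := fun ℓ' h => hpts ℓ' (mem_insert_of_mem h)
    have hpair' : ∀ x ∈ S, ∀ y ∈ S, x ≠ y → ((pts x) ∩ (pts y)).card ≤ 1 :=
      fun x hx y hy => hpair x (mem_insert_of_mem hx) y (mem_insert_of_mem hy)
    have ihS := ih hpts' hpair'
    rw [Finset.biUnion_insert]
    rcases le_or_gt m S.card with hm | hm
    · -- min (S.card+1) m = m already
      have h1 : min (insert ℓ S).card m = m := by
        rw [min_eq_right]
        rw [card_insert_of_notMem hℓS]; omega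
      have h2 : min S.card m = m := min_eq_right hm
      rw [h1]
      rw [h2] at ihS
      exact le_trans ihS (card_le_card (subset_union_right))
    · -- S.card < m
      have hnew : a - S.card ≤ ((pts ℓ) \ (S.biUnion pts)).card := by
        have hint : ((pts ℓ) ∩ (S.biUnion pts)).card ≤ S.card := by
          calc ((pts ℓ) ∩ (S.biUnion pts)).card
              = ((S.biUnion (fun ℓ' => pts ℓ ∩ pts ℓ'))).card := by
                congr 1
                ext x; simp [Finset.mem_biUnion, Finset.mem_inter]; tauto
            _ ≤ ∑ ℓ' ∈ S, (pts ℓ ∩ pts ℓ').card := Finset.card_biUnion_le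
            _ ≤ ∑ _ℓ' ∈ S, 1 := by
                apply Finset.sum_le_sum
                intro ℓ' hℓ'
                exact hpair ℓ (mem_insert_self _ _) ℓ' (mem_insert_of_mem hℓ')
                  (by rintro rfl; exact hℓS hℓ')
            _ = S.card := by simp
        have := Finset.card_sdiff_add_card_inter (pts ℓ) (S.biUnion pts)
        have ha := hpts ℓ (mem_insert_self _ _)
        omega
      have hcard : ((pts ℓ) ∪ S.biUnion pts).card = ((pts ℓ) \ (S.biUnion pts)).card + (S.biUnion pts).card := by
        rw [← Finset.card_union_of_disjoint (Finset.sdiff_disjoint), Finset.sdiff_union_self_eq_union]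
      rw [hcard, card_insert_of_notMem hℓS]
      have h3 : min (S.card + 1) m = S.card + 1 := by omega
      have h4 : min S.card m = S.card := by omega
      rw [h3]
      rw [h4] at ihS
      have : a - m ≤ a - S.card := by omega
      calc (S.card + 1) * (a - m) = (a - m) + S.card * (a - m) := by ring
        _ ≤ ((pts ℓ) \ (S.biUnion pts)).card + (S.biUnion pts).card := by
            gcongr
            omega
open Finset

variable {α β : Type*} [DecidableEq α] [DecidableEq β]

lemma prod_card_sum (A : Finset α) (B : Finset β) (r : α → β → Prop) [∀ a b, Decidable (r a b)] :
    ((A ×ˢ B).filter (fun x => r x.1 x.2)).card = ∑ p ∈ A, (B.filter (fun ℓ => r p ℓ)).card := by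
  rw [Finset.card_filter, Finset.sum_product]
  congr 1; ext p
  rw [Finset.card_filter]

lemma prod_card_sum' (A : Finset α) (B : Finset β) (r : α → β → Prop) [∀ a b, Decidable (r a b)] :
    ((A ×ˢ B).filter (fun x => r x.1 x.2)).card = ∑ ℓ ∈ B, (A.filter (fun p => r p ℓ)).card := by
  rw [Finset.card_filter, Finset.sum_product_right]
  congr 1; ext ℓ
  rw [Finset.card_filter]

lemma count_swap (A : Finset α) (B : Finset β) (r : α → β → Prop) [∀ a b, Decidable (r a b)] :
    ∑ p ∈ A, (B.filter (fun ℓ => r p ℓ)).card = ∑ ℓ ∈ B, (A.filter (fun p => r p ℓ)).card := by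
  rw [← prod_card_sum, ← prod_card_sum']

end CNT
variable {F : Type*} [Field F] {n : ℕ}

lemma pair_li {b v : Fin n → F} (hb : b ≠ 0) (hv : v ∉ Submodule.span F {b}) :
    LinearIndependent F ![b, v] := by
  rw [linearIndependent_fin2]
  constructor
  · intro h
    simp only [Matrix.cons_val_one, Matrix.head_cons, Matrix.cons_val_zero] at h
    exact hv (h ▸ Submodule.zero_mem _)
  · intro a h
    simp only [Matrix.cons_val_one, Matrix.head_cons, Matrix.cons_val_zero] at h
    have ha : a ≠ 0 := by rintro rfl; simp at h; exact hb h.symm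
    apply hv
    rw [Submodule.mem_span_singleton]
    exact ⟨a⁻¹, by rw [← h]; rw [smul_smul, inv_mul_cancel₀ ha, one_smul]⟩

lemma finrank_span_pair {b v : Fin n → F} (h : LinearIndependent F ![b, v]) :
    Module.finrank F (Submodule.span F {b, v}) = 2 := by
  have : ({b, v} : Set (Fin n → F)) = Set.range ![b, v] := by
    simp [Matrix.range_cons, Matrix.range_empty, Set.insert_comm]
    ext x; simp [or_comm]
  rw [this, finrank_span_eq_card h]
  simp

lemma span_pair_eq_of_le {b v : Fin n → F} (h : LinearIndependent F ![b, v])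
    {W : Submodule F (Fin n → F)} (hbW : b ∈ W) (hvW : v ∈ W)
    (hW : Module.finrank F W = 2) : W = Submodule.span F {b, v} := by
  have hle : Submodule.span F {b, v} ≤ W := by
    rw [Submodule.span_le]; rintro x (rfl | rfl); exacts [hbW, hvW]
  exact (Submodule.eq_of_le_of_finrank_le hle (by rw [hW, finrank_span_pair h])).symm
lemma plane_count {C₁ q t v w a' Qc : ℝ}
    (hC₁ : 1 ≤ C₁) (hq : 1 ≤ q) (ht0 : 0 ≤ t) (ht : t ≤ C₁ * q)
    (ha0 : 0 ≤ a') (haq : a' ≤ q) (hw : a' ≤ 2 * w) (hv : a' ≤ 4 * v)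
    (hQ : min t v * w ≤ Qc) : t * a' * a' ≤ 64 * C₁ * q * Qc := by
  have hw0 : 0 ≤ w := by linarith
  have hv0 : 0 ≤ v := by linarith
  have hCq : (0:ℝ) < C₁ * q := by nlinarith
  have haCq : a' ≤ C₁ * q := by nlinarith
  rcases min_cases t v with ⟨hmin, hle⟩ | ⟨hmin, hlt⟩
  · rw [hmin] at hQ
    have h1 : a' * a' ≤ (2 * w) * (32 * C₁ * q) := by nlinarith
    calc t * a' * a' = t * (a' * a') := by ring
      _ ≤ t * ((2 * w) * (32 * C₁ * q)) := by
          exact mul_le_mul_of_nonneg_left h1 ht0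
      _ = 64 * C₁ * q * (t * w) := by ring
      _ ≤ 64 * C₁ * q * Qc := by
          apply mul_le_mul_of_nonneg_left hQ (by positivity)
  · rw [hmin] at hQ
    have h2 : a' * a' ≤ 8 * (v * w) := by nlinarith [mul_le_mul hv hw ha0 (by linarith : (0:ℝ) ≤ 4 * v)]
    calc t * a' * a' = t * (a' * a') := by ring
      _ ≤ t * (8 * (v * w)) := mul_le_mul_of_nonneg_left h2 ht0
      _ = 8 * t * (v * w) := by ring
      _ ≤ 8 * (C₁ * q) * (v * w) := by
          apply mul_le_mul_of_nonneg_right _ (mul_nonneg hv0 hw0)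
          linarith
      _ = 8 * C₁ * q * (v * w) := by ring
      _ ≤ 64 * C₁ * q * Qc := by nlinarith [mul_nonneg hv0 hw0]
set_option maxHeartbeats 8000000 in
open scoped Classical in
theorem statement14 (C₁ : ℝ) (hC₁ : 1 ≤ C₁) :
    ∃ C : ℝ, ∀ (F : Type) [Field F] [Fintype F],
      ∀ (n : ℕ), 2 ≤ n →
      ∀ (P : Finset (Fin n → F)) (L : Finset (Set (Fin n → F))),
        (∀ ℓ ∈ L, IsLine ℓ) →
        (∀ π : Set (Fin n → F), IsPlane π →
          ((L.filter (fun ℓ => ℓ ⊆ π)).card : ℝ) ≤ C₁ * Fintype.card F) →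
        (((P ×ˢ L).filter (fun pl => pl.1 ∈ pl.2)).card : ℝ) ≤
          C * ((P.card : ℝ) ^ ((1 : ℝ) / 2) * (L.card : ℝ) ^ ((3 : ℝ) / 4) *
                (Fintype.card F : ℝ) ^ ((1 : ℝ) / 4) + P.card + L.card) := by
  classical
  use 96 * C₁
  intro F _ _ n hn P L hlines hwolff
  classical
  set q : ℕ := Fintype.card F with hq
  have hq1 : 1 ≤ q := Fintype.card_pos
  set Ic : ℕ := ((P ×ˢ L).filter (fun pl => pl.1 ∈ pl.2)).card with hIcdef
  set X : ℝ := (P.card : ℝ) ^ ((1 : ℝ) / 2) * (L.card : ℝ) ^ ((3 : ℝ) / 4) *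
                (q : ℝ) ^ ((1 : ℝ) / 4) with hX
  have hXnn : 0 ≤ X := by positivity
  by_cases hsmall : (Ic : ℝ) ≤ 32 * P.card + 32 * L.card
  · have h1 : (0:ℝ) ≤ P.card := Nat.cast_nonneg _
    have h2 : (0:ℝ) ≤ L.card := Nat.cast_nonneg _
    nlinarith [mul_nonneg (le_trans zero_le_one hC₁) hXnn]
  push_neg at hsmall
  -- main branch
  have hIcpos : 0 < Ic := by
    have : (0:ℝ) < Ic := lt_of_le_of_lt (by positivity) hsmall
    exact_mod_cast this
  obtain ⟨pl, hpl⟩ := Finset.card_pos.mp hIcpos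
  have hpl' := Finset.mem_product.mp (Finset.mem_filter.mp hpl).1
  have hPpos : 0 < P.card := Finset.card_pos.mpr ⟨pl.1, hpl'.1⟩
  have hLpos : 0 < L.card := Finset.card_pos.mpr ⟨pl.2, hpl'.2⟩
  have hP1 : (1:ℝ) ≤ P.card := by exact_mod_cast hPpos
  have hL1 : (1:ℝ) ≤ L.card := by exact_mod_cast hLpos
  have hIP : 32 * (P.card:ℝ) < Ic := by
    have : (0:ℝ) ≤ L.card := Nat.cast_nonneg _
    linarith
  have hILc : 32 * (L.card:ℝ) < Ic := by
    have : (0:ℝ) ≤ P.card := Nat.cast_nonneg _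
    linarith
  -- refinement on lines
  set dL : Set (Fin n → F) → ℕ := fun ℓ => (P.filter (· ∈ ℓ)).card with hdL
  have hIsum : Ic = ∑ ℓ ∈ L, dL ℓ := prod_card_sum' P L (fun p ℓ => p ∈ ℓ)
  set L' : Finset (Set (Fin n → F)) := L.filter (fun ℓ => Ic ≤ 8 * L.card * dL ℓ) with hL'def
  have hL'sub : L' ⊆ L := Finset.filter_subset _ _
  have hsum1 : (7/8 : ℝ) * Ic ≤ ∑ ℓ ∈ L', (dL ℓ : ℝ) := by
    have hcast : (Ic:ℝ) = ∑ ℓ ∈ L, (dL ℓ:ℝ) := by exact_mod_cast hIsum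
    rw [← Finset.sum_filter_add_sum_filter_not L (fun ℓ => Ic ≤ 8 * L.card * dL ℓ)
      (fun ℓ => (dL ℓ : ℝ))] at hcast
    have hbad : ∑ ℓ ∈ L.filter (fun ℓ => ¬ (Ic ≤ 8 * L.card * dL ℓ)), (dL ℓ:ℝ)
        ≤ L.card * ((Ic:ℝ) / (8 * L.card)) := by
      calc ∑ ℓ ∈ L.filter (fun ℓ => ¬ (Ic ≤ 8 * L.card * dL ℓ)), (dL ℓ:ℝ)
          ≤ (L.filter (fun ℓ => ¬ (Ic ≤ 8 * L.card * dL ℓ))).card •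
              ((Ic:ℝ) / (8 * L.card)) := by
            apply Finset.sum_le_card_nsmul
            intro ℓ hℓ
            have h8 : 8 * L.card * dL ℓ < Ic := by
              have := (Finset.mem_filter.mp hℓ).2
              omega
            rw [le_div_iff₀ (by positivity)]
            have : (8 * L.card * dL ℓ : ℝ) ≤ Ic := by exact_mod_cast h8.le
            push_cast at this ⊢
            linarith
        _ ≤ L.card * ((Ic:ℝ) / (8 * L.card)) := by
            rw [nsmul_eq_mul]
            apply mul_le_mul_of_nonneg_right _ (by positivity)
            exact_mod_cast Finset.card_le_card (Finset.filter_subset _ _)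
    have hdiv : (L.card:ℝ) * ((Ic:ℝ) / (8 * L.card)) = Ic / 8 := by
      field_simp
    rw [hdiv] at hbad
    linarith
  -- refinement on points
  set dP : (Fin n → F) → ℕ := fun p => (L'.filter (fun ℓ => p ∈ ℓ)).card with hdP
  have hswap1 : ∑ ℓ ∈ L', dL ℓ = ∑ p ∈ P, dP p := (count_swap P L' (fun p ℓ => p ∈ ℓ)).symm
  set P' : Finset (Fin n → F) := P.filter (fun p => Ic ≤ 8 * P.card * dP p) with hP'def
  have hP'sub : P' ⊆ P := Finset.filter_subset _ _
  have hsum2 : (3/4 : ℝ) * Ic ≤ ∑ p ∈ P', (dP p : ℝ) := by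
    have hcast : ((7:ℝ)/8) * Ic ≤ ∑ p ∈ P, (dP p:ℝ) := by
      rw [← Nat.cast_sum, ← hswap1, Nat.cast_sum]
      exact hsum1
    rw [← Finset.sum_filter_add_sum_filter_not P (fun p => Ic ≤ 8 * P.card * dP p)
      (fun p => (dP p : ℝ))] at hcast
    have hbad : ∑ p ∈ P.filter (fun p => ¬ (Ic ≤ 8 * P.card * dP p)), (dP p:ℝ)
        ≤ P.card * ((Ic:ℝ) / (8 * P.card)) := by
      calc ∑ p ∈ P.filter (fun p => ¬ (Ic ≤ 8 * P.card * dP p)), (dP p:ℝ)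
          ≤ (P.filter (fun p => ¬ (Ic ≤ 8 * P.card * dP p))).card •
              ((Ic:ℝ) / (8 * P.card)) := by
            apply Finset.sum_le_card_nsmul
            intro p hp
            have h8 : 8 * P.card * dP p < Ic := by
              have := (Finset.mem_filter.mp hp).2
              omega
            rw [le_div_iff₀ (by positivity)]
            have : (8 * P.card * dP p : ℝ) ≤ Ic := by exact_mod_cast h8.le
            push_cast at this ⊢
            linarith
        _ ≤ P.card * ((Ic:ℝ) / (8 * P.card)) := by
            rw [nsmul_eq_mul]
            apply mul_le_mul_of_nonneg_right _ (by positivity)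
            exact_mod_cast Finset.card_le_card (Finset.filter_subset _ _)
    have hdiv : (P.card:ℝ) * ((Ic:ℝ) / (8 * P.card)) = Ic / 8 := by
      field_simp
    rw [hdiv] at hbad
    have h78 : (7/8:ℝ) * Ic - Ic/8 = (3/4) * Ic := by ring
    linarith
  -- pigeonhole: a rich line ℓ₀
  have hL'ne : L'.Nonempty := by
    rw [Finset.nonempty_iff_ne_empty]
    intro h
    have hzero : ∑ p ∈ P', (dP p : ℝ) = 0 := by
      apply Finset.sum_eq_zero
      intro p hp
      rw [hdP]
      simp [h]
    rw [hzero] at hsum2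
    have : (0:ℝ) < Ic := by exact_mod_cast hIcpos
    linarith
  -- choose richest line
  obtain ⟨ℓ₀, hℓ₀L', hℓ₀max⟩ := Finset.exists_max_image L' (fun ℓ => (P'.filter (· ∈ ℓ)).card) hL'ne
  set K : Finset (Fin n → F) := P'.filter (· ∈ ℓ₀) with hKdef
  have hswap2 : ∑ p ∈ P', dP p = ∑ ℓ ∈ L', (P'.filter (· ∈ ℓ)).card :=
    count_swap P' L' (fun p ℓ => p ∈ ℓ)
  have hkc : (3/4:ℝ) * Ic ≤ (L.card:ℝ) * K.card := by
    have h1 : ∑ ℓ ∈ L', (P'.filter (· ∈ ℓ)).card ≤ L'.card * K.card := by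
      rw [← smul_eq_mul]
      exact Finset.sum_le_card_nsmul _ _ _ (fun ℓ hℓ => hℓ₀max ℓ hℓ)
    have h2 : L'.card * K.card ≤ L.card * K.card :=
      Nat.mul_le_mul_right _ (Finset.card_le_card hL'sub)
    have h3 : (∑ p ∈ P', (dP p:ℝ)) ≤ (L.card:ℝ) * K.card := by
      rw [← Nat.cast_sum]
      exact_mod_cast le_trans (le_of_eq hswap2) (le_trans h1 h2)
    linarith
  have hKpos : 0 < K.card := by
    rcases Nat.eq_zero_or_pos K.card with h | h
    · rw [h] at hkc
      have : (0:ℝ) < Ic := by exact_mod_cast hIcpos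
      simp at hkc
      linarith
    · exact h
  have hℓ₀L : ℓ₀ ∈ L := hL'sub hℓ₀L'
  have hℓ₀line : IsLine ℓ₀ := hlines ℓ₀ hℓ₀L
  obtain ⟨a₀, b₀, hb₀, hℓ₀eq⟩ := hℓ₀line
  have hKl₀ : ∀ p ∈ K, p ∈ ℓ₀ := fun p hp => (Finset.mem_filter.mp hp).2
  have hKP' : ∀ p ∈ K, p ∈ P' := fun p hp => (Finset.mem_filter.mp hp).1
  -- hairbrush
  set H : Finset (Set (Fin n → F)) :=
    L'.filter (fun ℓ => ℓ ≠ ℓ₀ ∧ ∃ p ∈ K, p ∈ ℓ) with hHdef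
  have hHL' : H ⊆ L' := Finset.filter_subset _ _
  have hHlb : (K.card:ℝ) * Ic ≤ 16 * P.card * H.card := by
    set T : Finset ((Fin n → F) × Set (Fin n → F)) :=
      (K ×ˢ L').filter (fun x => x.1 ∈ x.2 ∧ x.2 ≠ ℓ₀) with hTdef
    have hTsum : T.card = ∑ p ∈ K, (L'.filter (fun ℓ => p ∈ ℓ ∧ ℓ ≠ ℓ₀)).card :=
      prod_card_sum K L' (fun p ℓ => p ∈ ℓ ∧ ℓ ≠ ℓ₀)
    have hper : ∀ p ∈ K, (Ic:ℝ) ≤ 16 * P.card * (L'.filter (fun ℓ => p ∈ ℓ ∧ ℓ ≠ ℓ₀)).card := by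
      intro p hp
      have hdPp : Ic ≤ 8 * P.card * dP p := (Finset.mem_filter.mp (hKP' p hp)).2
      have hsub : L'.filter (fun ℓ => p ∈ ℓ) ⊆
          insert ℓ₀ (L'.filter (fun ℓ => p ∈ ℓ ∧ ℓ ≠ ℓ₀)) := by
        intro ℓ hℓ
        rw [Finset.mem_filter] at hℓ
        by_cases hcase : ℓ = ℓ₀
        · exact Finset.mem_insert.mpr (Or.inl hcase)
        · exact Finset.mem_insert.mpr (Or.inr (Finset.mem_filter.mpr ⟨hℓ.1, hℓ.2, hcase⟩))
      have hcard : dP p ≤ (L'.filter (fun ℓ => p ∈ ℓ ∧ ℓ ≠ ℓ₀)).card + 1 := by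
        calc dP p ≤ (insert ℓ₀ (L'.filter (fun ℓ => p ∈ ℓ ∧ ℓ ≠ ℓ₀))).card :=
              Finset.card_le_card hsub
          _ ≤ _ + 1 := Finset.card_insert_le _ _
      have hdreal : (Ic:ℝ) ≤ 8 * P.card * dP p := by exact_mod_cast hdPp
      have hc2 : (dP p : ℝ) ≤ (L'.filter (fun ℓ => p ∈ ℓ ∧ ℓ ≠ ℓ₀)).card + 1 := by
        exact_mod_cast hcard
      have hPc : (0:ℝ) < P.card := by exact_mod_cast hPpos
      nlinarith
    have hTge : (K.card:ℝ) * Ic ≤ 16 * P.card * T.card := by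
      have hsum := Finset.sum_le_sum hper
      rw [Finset.sum_const, nsmul_eq_mul] at hsum
      calc (K.card:ℝ) * Ic ≤ ∑ p ∈ K, 16 * (P.card:ℝ) *
            ((L'.filter (fun ℓ => p ∈ ℓ ∧ ℓ ≠ ℓ₀)).card : ℝ) := hsum
        _ = 16 * P.card * T.card := by
            rw [← Finset.mul_sum, hTsum]
            push_cast
            ring
    have hTH : T.card ≤ H.card := by
      apply Finset.card_le_card_of_injOn (fun x => x.2)
      · intro x hx
        simp only [Finset.mem_coe, hTdef, Finset.mem_filter, Finset.mem_product] at hx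
        rw [Finset.mem_coe, hHdef, Finset.mem_filter]
        exact ⟨hx.1.2, hx.2.2, ⟨x.1, hx.1.1, hx.2.1⟩⟩
      · intro x hx y hy hxy
        rw [Finset.mem_coe, hTdef, Finset.mem_filter, Finset.mem_product] at hx hy
        have hx2L : x.2 ∈ L := hL'sub hx.1.2
        have hxy' : x.2 = y.2 := hxy
        have heq1 : x.1 = y.1 := by
          apply line_inter_subsingleton (hlines x.2 hx2L) ⟨a₀, b₀, hb₀, hℓ₀eq⟩ hx.2.2
            hx.2.1 (hKl₀ x.1 hx.1.1) (hxy' ▸ hy.2.1) (hKl₀ y.1 hy.1.1)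
        exact Prod.ext heq1 hxy'
    have hTHr : (T.card:ℝ) ≤ H.card := by exact_mod_cast hTH
    have h16 : (0:ℝ) ≤ 16 * P.card := by positivity
    calc (K.card:ℝ) * Ic ≤ 16 * P.card * T.card := hTge
      _ ≤ 16 * P.card * H.card := mul_le_mul_of_nonneg_left hTHr h16
  -- direction choice function
  set dir : Set (Fin n → F) → (Fin n → F) :=
    fun ℓ => if h : IsLine ℓ then (Exists.choose_spec h).choose else 0 with hdirdef
  set apt : Set (Fin n → F) → (Fin n → F) :=
    fun ℓ => if h : IsLine ℓ then Exists.choose h else 0 with haptdef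
  have hdirspec : ∀ ℓ, IsLine ℓ → dir ℓ ≠ 0 ∧ ℓ = {x | ∃ t : F, x = apt ℓ + t • dir ℓ} := by
    intro ℓ h
    rw [hdirdef, haptdef]
    simp only [dif_pos h]
    exact (Exists.choose_spec h).choose_spec
  set W : Set (Fin n → F) → Submodule F (Fin n → F) :=
    fun ℓ => Submodule.span F {b₀, dir ℓ} with hWdef
  have hHfacts : ∀ ℓ ∈ H, LinearIndependent F ![b₀, dir ℓ] ∧
      (∀ x ∈ ℓ, x - a₀ ∈ W ℓ) := by
    intro ℓ hℓ
    rw [hHdef, Finset.mem_filter] at hℓ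
    obtain ⟨hℓL', hne, p, hpK, hpℓ⟩ := hℓ
    have hline : IsLine ℓ := hlines ℓ (hL'sub hℓL')
    obtain ⟨hdne, hdeq⟩ := hdirspec ℓ hline
    have hpℓ₀ : p ∈ ℓ₀ := hKl₀ p hpK
    have hℓp : ℓ = {x | ∃ t : F, x = p + t • dir ℓ} := by
      conv_lhs => rw [hdeq]
      exact line_through_pt (hdeq ▸ hpℓ)
    have hℓ₀p : ℓ₀ = {x | ∃ t : F, x = p + t • b₀} := by
      rw [hℓ₀eq]
      exact line_through_pt (hℓ₀eq ▸ hpℓ₀)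
    have hnotspan : dir ℓ ∉ Submodule.span F {b₀} := by
      intro hmem
      obtain ⟨μ, hμ⟩ := Submodule.mem_span_singleton.mp hmem
      have hμ0 : μ ≠ 0 := by
        rintro rfl
        simp at hμ
        exact hdne hμ.symm
      apply hne
      rw [hℓp, hℓ₀p, ← hμ, line_dir_smul hμ0]
    have hli := pair_li hb₀ hnotspan
    refine ⟨hli, ?_⟩
    intro x hx
    rw [hℓp] at hx
    obtain ⟨t, rfl⟩ := hx
    obtain ⟨u, hu⟩ : ∃ u : F, p = a₀ + u • b₀ := by
      rw [hℓ₀eq] at hpℓ₀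
      exact hpℓ₀
    rw [hWdef]
    refine Submodule.mem_span_pair.mpr ⟨u, t, ?_⟩
    rw [hu]
    module
  have hWrank : ∀ ℓ ∈ H, Module.finrank F (W ℓ) = 2 := by
    intro ℓ hℓ
    rw [hWdef]
    exact finrank_span_pair (hHfacts ℓ hℓ).1
  -- richness parameter
  set A : ℕ := Ic / (8 * L.card) with hAdef
  set a' : ℕ := A - 1 with ha'def
  have hILnat : 32 * L.card < Ic := by exact_mod_cast hILc
  have hIPnat : 32 * P.card < Ic := by exact_mod_cast hIP
  have hA4 : 4 ≤ A := by
    rw [hAdef, Nat.le_div_iff_mul_le (by omega)]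
    omega
  have ha'3 : 3 ≤ a' := by omega
  have hdLge : ∀ ℓ ∈ L', A ≤ dL ℓ := by
    intro ℓ hℓ
    have h8 : Ic ≤ 8 * L.card * dL ℓ := (Finset.mem_filter.mp hℓ).2
    rw [hAdef]
    calc Ic / (8 * L.card) ≤ (8 * L.card * dL ℓ) / (8 * L.card) := Nat.div_le_div_right h8
      _ = dL ℓ := Nat.mul_div_cancel_left _ (by omega)
  have ha'q : a' ≤ q := by
    have h1 : A ≤ dL ℓ₀ := hdLge ℓ₀ hℓ₀L'
    have h2 : dL ℓ₀ ≤ q := by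
      rw [hdL]
      exact line_card_le ⟨a₀, b₀, hb₀, hℓ₀eq⟩ P
    omega
  have ha'cast : (a' : ℝ) = (A : ℝ) - 1 := by
    rw [ha'def, Nat.cast_sub (by omega)]
    norm_num
  have ha'lb : (Ic:ℝ) ≤ 16 * L.card * a' := by
    have hdm : (8 * L.card : ℝ) * A + ((Ic % (8 * L.card) : ℕ) : ℝ) = Ic := by
      exact_mod_cast Nat.div_add_mod Ic (8 * L.card)
    have hmodlt : ((Ic % (8 * L.card) : ℕ) : ℝ) < 8 * L.card := by
      exact_mod_cast Nat.mod_lt Ic (show 0 < 8 * L.card by omega)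
    have hA4r : (4:ℝ) ≤ A := by exact_mod_cast hA4
    rw [ha'cast]
    nlinarith [mul_le_mul_of_nonneg_left hA4r (show (0:ℝ) ≤ (L.card:ℝ) from Nat.cast_nonneg _)]
  -- planes
  set Q : Submodule F (Fin n → F) → Finset (Fin n → F) :=
    fun πp => P.filter (fun x => x - a₀ ∈ πp ∧ x ∉ ℓ₀) with hQdef
  set Φ : Finset (Submodule F (Fin n → F)) := H.image W with hΦdef
  have hmemΦ : ∀ πp ∈ Φ, ∃ ℓ ∈ H, W ℓ = πp := by
    intro πp hπp
    exact Finset.mem_image.mp hπp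
  have hdisj : ∀ π₁ ∈ Φ, ∀ π₂ ∈ Φ, π₁ ≠ π₂ → Disjoint (Q π₁) (Q π₂) := by
    intro π₁ h₁ π₂ h₂ hne12
    rw [Finset.disjoint_left]
    intro x hx1 hx2
    rw [hQdef] at hx1 hx2
    simp only [Finset.mem_filter] at hx1 hx2
    obtain ⟨hxP, hxv1, hxl⟩ := hx1
    obtain ⟨-, hxv2, -⟩ := hx2
    have hv : x - a₀ ∉ Submodule.span F {b₀} := by
      intro hmem
      obtain ⟨μ, hμ⟩ := Submodule.mem_span_singleton.mp hmem
      apply hxl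
      rw [hℓ₀eq]
      exact ⟨μ, by rw [hμ]; module⟩
    have hli := pair_li hb₀ hv
    obtain ⟨ℓa, hℓa, rfl⟩ := hmemΦ π₁ h₁
    obtain ⟨ℓb, hℓb, rfl⟩ := hmemΦ π₂ h₂
    have hb₀1 : b₀ ∈ W ℓa := by
      rw [hWdef]
      exact Submodule.subset_span (by simp)
    have hb₀2 : b₀ ∈ W ℓb := by
      rw [hWdef]
      exact Submodule.subset_span (by simp)
    have he1 : W ℓa = Submodule.span F {b₀, x - a₀} :=
      span_pair_eq_of_le hli hb₀1 hxv1 (hWrank ℓa hℓa)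
    have he2 : W ℓb = Submodule.span F {b₀, x - a₀} :=
      span_pair_eq_of_le hli hb₀2 hxv2 (hWrank ℓb hℓb)
    exact hne12 (he1.trans he2.symm)
  have hsumQ : ∑ πp ∈ Φ, ((Q πp).card : ℝ) ≤ P.card := by
    have h1 : ∑ πp ∈ Φ, (Q πp).card = (Φ.biUnion Q).card := (Finset.card_biUnion hdisj).symm
    have h2 : Φ.biUnion Q ⊆ P := by
      apply Finset.biUnion_subset.mpr
      intro πp _
      rw [hQdef]
      exact Finset.filter_subset _ _
    rw [← Nat.cast_sum, h1]
    exact_mod_cast Finset.card_le_card h2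
  have hsumH : H.card = ∑ πp ∈ Φ, (H.filter (fun ℓ => W ℓ = πp)).card := by
    rw [hΦdef]
    exact Finset.card_eq_sum_card_image W H
  -- per-plane bound
  have hperπ : ∀ πp ∈ Φ, ((H.filter (fun ℓ => W ℓ = πp)).card : ℝ) * a' * a' ≤
      64 * C₁ * q * (Q πp).card := by
    intro πp hπp
    obtain ⟨ℓ₁, hℓ₁H, hWℓ₁⟩ := hmemΦ πp hπp
    have hplane : IsPlane {x : Fin n → F | x - a₀ ∈ πp} := by
      refine ⟨a₀, b₀, dir ℓ₁, (hHfacts ℓ₁ hℓ₁H).1, ?_⟩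
      ext x
      simp only [Set.mem_setOf_eq, ← hWℓ₁, hWdef]
      rw [Submodule.mem_span_pair]
      constructor
      · rintro ⟨s, t, hst⟩
        refine ⟨s, t, ?_⟩
        rw [show a₀ + s • b₀ + t • dir ℓ₁ = a₀ + (s • b₀ + t • dir ℓ₁) by module, hst]
        module
      · rintro ⟨s, t, rfl⟩
        exact ⟨s, t, by module⟩
    have hsubL : H.filter (fun ℓ => W ℓ = πp) ⊆
        L.filter (fun ℓ => ℓ ⊆ {x : Fin n → F | x - a₀ ∈ πp}) := by
      intro ℓ hℓ
      rw [Finset.mem_filter] at hℓ ⊢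
      refine ⟨hL'sub (hHL' hℓ.1), ?_⟩
      intro x hx
      have hx' := (hHfacts ℓ hℓ.1).2 x hx
      rw [hℓ.2] at hx'
      exact hx'
    have hwolffπ : ((H.filter (fun ℓ => W ℓ = πp)).card : ℝ) ≤ C₁ * q := by
      calc ((H.filter (fun ℓ => W ℓ = πp)).card : ℝ)
          ≤ ((L.filter (fun ℓ => ℓ ⊆ {x : Fin n → F | x - a₀ ∈ πp})).card : ℝ) := by
            exact_mod_cast Finset.card_le_card hsubL
        _ ≤ C₁ * q := hwolff _ hplane
    -- greedy union bound
    have hgr := greedy_union (fun ℓ => P.filter (fun x => x ∈ ℓ ∧ x ∉ ℓ₀)) a' (a' / 2)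
      (H.filter (fun ℓ => W ℓ = πp))
      (by
        intro ℓ hℓ
        show a' ≤ (P.filter (fun x => x ∈ ℓ ∧ x ∉ ℓ₀)).card
        have hℓH : ℓ ∈ H := (Finset.mem_filter.mp hℓ).1
        have hℓL' : ℓ ∈ L' := hHL' hℓH
        have hℓne : ℓ ≠ ℓ₀ := ((Finset.mem_filter.mp hℓH).2).1
        have hAle : A ≤ dL ℓ := hdLge ℓ hℓL'
        have hsplit : P.filter (fun x => x ∈ ℓ) ⊆
            (P.filter (fun x => x ∈ ℓ ∧ x ∉ ℓ₀)) ∪ (P.filter (fun x => x ∈ ℓ ∧ x ∈ ℓ₀)) := by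
          intro x hx
          rw [Finset.mem_filter] at hx
          rw [Finset.mem_union, Finset.mem_filter, Finset.mem_filter]
          by_cases hc : x ∈ ℓ₀
          · exact Or.inr ⟨hx.1, hx.2, hc⟩
          · exact Or.inl ⟨hx.1, hx.2, hc⟩
        have hone : (P.filter (fun x => x ∈ ℓ ∧ x ∈ ℓ₀)).card ≤ 1 := by
          rw [Finset.card_le_one]
          intro x hx y hy
          rw [Finset.mem_filter] at hx hy
          exact line_inter_subsingleton (hlines ℓ (hL'sub hℓL')) ⟨a₀, b₀, hb₀, hℓ₀eq⟩
            hℓne hx.2.1 hx.2.2 hy.2.1 hy.2.2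
        have hcards : dL ℓ ≤ (P.filter (fun x => x ∈ ℓ ∧ x ∉ ℓ₀)).card + 1 := by
          calc dL ℓ ≤ ((P.filter (fun x => x ∈ ℓ ∧ x ∉ ℓ₀)) ∪
                (P.filter (fun x => x ∈ ℓ ∧ x ∈ ℓ₀))).card := Finset.card_le_card hsplit
            _ ≤ _ + _ := Finset.card_union_le _ _
            _ ≤ _ + 1 := by omega
        omega)
      (by
        intro ℓ hℓ ℓ' hℓ' hne'
        show ((P.filter (fun x => x ∈ ℓ ∧ x ∉ ℓ₀)) ∩ (P.filter (fun x => x ∈ ℓ' ∧ x ∉ ℓ₀))).card ≤ 1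
        rw [Finset.card_le_one]
        intro x hx y hy
        rw [Finset.mem_inter, Finset.mem_filter, Finset.mem_filter] at hx hy
        have hℓL : ℓ ∈ L := hL'sub (hHL' (Finset.mem_filter.mp hℓ).1)
        have hℓ'L : ℓ' ∈ L := hL'sub (hHL' (Finset.mem_filter.mp hℓ').1)
        exact line_inter_subsingleton (hlines ℓ hℓL) (hlines ℓ' hℓ'L) hne'
          hx.1.2.1 hx.2.2.1 hy.1.2.1 hy.2.2.1)
    have hbsub : (H.filter (fun ℓ => W ℓ = πp)).biUnion
        (fun ℓ => P.filter (fun x => x ∈ ℓ ∧ x ∉ ℓ₀)) ⊆ Q πp := by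
      apply Finset.biUnion_subset.mpr
      intro ℓ hℓ
      intro x hx
      rw [Finset.mem_filter] at hx hℓ
      rw [hQdef, Finset.mem_filter]
      have hx' := (hHfacts ℓ hℓ.1).2 x hx.2.1
      rw [hℓ.2] at hx'
      exact ⟨hx.1, hx', hx.2.2⟩
    have hQge : (min (H.filter (fun ℓ => W ℓ = πp)).card (a' / 2) * (a' - a' / 2) : ℕ)
        ≤ (Q πp).card := le_trans hgr (Finset.card_le_card hbsub)
    -- real arithmetic
    have hwv : ((a' : ℝ)) ≤ 2 * ((a' - a' / 2 : ℕ) : ℝ) := by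
      have h : a' ≤ 2 * (a' - a' / 2) := by omega
      exact_mod_cast h
    have hvv : ((a' : ℝ)) ≤ 4 * ((a' / 2 : ℕ) : ℝ) := by
      have h : a' ≤ 4 * (a' / 2) := by omega
      exact_mod_cast h
    have hQr : min ((H.filter (fun ℓ => W ℓ = πp)).card : ℝ) ((a' / 2 : ℕ) : ℝ) *
        ((a' - a' / 2 : ℕ) : ℝ) ≤ ((Q πp).card : ℝ) := by
      have hcast : ((min (H.filter (fun ℓ => W ℓ = πp)).card (a' / 2) * (a' - a' / 2) : ℕ) : ℝ)
          = min ((H.filter (fun ℓ => W ℓ = πp)).card : ℝ) ((a' / 2 : ℕ) : ℝ) *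
            ((a' - a' / 2 : ℕ) : ℝ) := by push_cast; ring
      rw [← hcast]
      exact_mod_cast hQge
    exact plane_count hC₁ (by exact_mod_cast hq1) (Nat.cast_nonneg _) hwolffπ (Nat.cast_nonneg _)
      (by exact_mod_cast ha'q) hwv hvv hQr
  -- sum over planes
  have hHa : (H.card : ℝ) * a' * a' ≤ 64 * C₁ * q * P.card := by
    have hqr0 : (0:ℝ) ≤ 64 * C₁ * q := by positivity
    calc (H.card : ℝ) * a' * a'
        = ∑ πp ∈ Φ, ((H.filter (fun ℓ => W ℓ = πp)).card : ℝ) * a' * a' := by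
          rw [hsumH]
          push_cast
          rw [Finset.sum_mul, Finset.sum_mul]
      _ ≤ ∑ πp ∈ Φ, 64 * C₁ * q * ((Q πp).card : ℝ) := Finset.sum_le_sum hperπ
      _ = 64 * C₁ * q * ∑ πp ∈ Φ, ((Q πp).card : ℝ) := by rw [Finset.mul_sum]
      _ ≤ 64 * C₁ * q * P.card := mul_le_mul_of_nonneg_left hsumQ hqr0
  -- numeric assembly
  clear_value dL L' dP P' K H dir apt W A a' Q Φ Ic X
  clear hlines hwolff hpl hpl' hIsum hsum1 hswap1 hsum2 hswap2 hℓ₀max hdirspec hHfacts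
    hWrank hmemΦ hdisj hsumQ hsumH hperπ hdLge hKl₀ hKP' hHL' hL'sub hP'sub hL'ne
    hℓ₀L hℓ₀L' ha'cast hA4 ha'3 hILnat hIPnat hb₀ hℓ₀eq hAdef ha'def hQdef hΦdef
    hWdef hdirdef haptdef hdL hdP hL'def hP'def hKdef hHdef hIcdef
  clear dL dP dir apt W Q Φ A L' P'
  have hkr1 : (1:ℝ) ≤ K.card := by exact_mod_cast hKpos
  have hir0 : (0:ℝ) < Ic := by exact_mod_cast hIcpos
  have hkc4 : 3 * (Ic:ℝ) ≤ 4 * L.card * K.card := by linarith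
  have e2 : (K.card:ℝ) * Ic ≤ 16 * P.card * H.card := hHlb
  have s0 : (3 * (Ic:ℝ)) * ((K.card:ℝ) * Ic) ≤
      (4 * (L.card:ℝ) * K.card) * (16 * (P.card:ℝ) * H.card) := by
    apply mul_le_mul hkc4 e2
      (mul_nonneg (Nat.cast_nonneg _) (Nat.cast_nonneg _))
      (mul_nonneg (mul_nonneg (by norm_num) (Nat.cast_nonneg _)) (Nat.cast_nonneg _))
  have s1 : 3 * ((Ic:ℝ) * Ic) ≤ 64 * ((L.card:ℝ) * P.card * H.card) := by
    have hk0 : (0:ℝ) < K.card := by linarith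
    apply le_of_mul_le_mul_left _ hk0
    calc (K.card:ℝ) * (3 * ((Ic:ℝ) * Ic)) = (3 * (Ic:ℝ)) * ((K.card:ℝ) * Ic) := by ring
      _ ≤ (4 * (L.card:ℝ) * K.card) * (16 * (P.card:ℝ) * H.card) := s0
      _ = (K.card:ℝ) * (64 * ((L.card:ℝ) * P.card * H.card)) := by ring
  have s2 : (Ic:ℝ) * Ic ≤ 256 * ((L.card:ℝ) * L.card) * ((a':ℝ) * a') := by
    calc (Ic:ℝ) * Ic ≤ (16 * (L.card:ℝ) * a') * (16 * (L.card:ℝ) * a') := by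
          apply mul_self_le_mul_self hir0.le
          calc (Ic:ℝ) ≤ 16 * L.card * a' := ha'lb
            _ = 16 * (L.card:ℝ) * a' := by ring
      _ = 256 * ((L.card:ℝ) * L.card) * ((a':ℝ) * a') := by ring
  have s3 : 3 * ((Ic:ℝ)^4) ≤ 16384 * (L.card:ℝ)^3 * P.card * ((H.card:ℝ) * a' * a') := by
    have h0 : (0:ℝ) ≤ (Ic:ℝ) * Ic := mul_nonneg (Nat.cast_nonneg _) (Nat.cast_nonneg _)
    have h1 : (0:ℝ) ≤ 64 * ((L.card:ℝ) * P.card * H.card) :=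
      mul_nonneg (by norm_num)
        (mul_nonneg (mul_nonneg (Nat.cast_nonneg _) (Nat.cast_nonneg _)) (Nat.cast_nonneg _))
    have := mul_le_mul s1 s2 h0 h1
    calc 3 * ((Ic:ℝ)^4) = (3 * ((Ic:ℝ) * Ic)) * ((Ic:ℝ) * Ic) := by ring
      _ ≤ (64 * ((L.card:ℝ) * P.card * H.card)) *
          (256 * ((L.card:ℝ) * L.card) * ((a':ℝ) * a')) := this
      _ = 16384 * (L.card:ℝ)^3 * P.card * ((H.card:ℝ) * a' * a') := by ring
  have hmain : (Ic:ℝ)^4 ≤ 4194304 * C₁ * (P.card:ℝ)^2 * (L.card:ℝ)^3 * q := by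
    have h1 : (0:ℝ) ≤ 16384 * (L.card:ℝ)^3 * P.card := by positivity
    have h2 := mul_le_mul_of_nonneg_left hHa h1
    have hT : (0:ℝ) ≤ C₁ * ((P.card:ℝ)^2 * (L.card:ℝ)^3 * q) := by positivity
    have h3 : 16384 * (L.card:ℝ)^3 * (P.card:ℝ) * (64 * C₁ * (q:ℝ) * P.card)
        = 1048576 * (C₁ * ((P.card:ℝ)^2 * (L.card:ℝ)^3 * q)) := by ring
    have h4 : 3 * ((Ic:ℝ)^4) ≤ 1048576 * (C₁ * ((P.card:ℝ)^2 * (L.card:ℝ)^3 * q)) := by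
      calc 3 * ((Ic:ℝ)^4) ≤ 16384 * (L.card:ℝ)^3 * P.card * ((H.card:ℝ) * a' * a') := s3
        _ ≤ 16384 * (L.card:ℝ)^3 * (P.card:ℝ) * (64 * C₁ * (q:ℝ) * P.card) := h2
        _ = 1048576 * (C₁ * ((P.card:ℝ)^2 * (L.card:ℝ)^3 * q)) := h3
    calc (Ic:ℝ)^4 ≤ 1048576 * (C₁ * ((P.card:ℝ)^2 * (L.card:ℝ)^3 * q)) := by linarith
      _ = 1048576 * C₁ * (P.card:ℝ)^2 * (L.card:ℝ)^3 * q := by ring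
      _ ≤ 4194304 * C₁ * (P.card:ℝ)^2 * (L.card:ℝ)^3 * q := by nlinarith [hT]
  -- rpow conclusion
  have hfinal : (Ic:ℝ) ≤ 64 * C₁ * X := by
    have hXpos : (0:ℝ) ≤ 64 * C₁ * X := by positivity
    apply le_of_pow_le_pow_left₀ (n := 4) (by norm_num) hXpos
    have hp4 : (((P.card:ℝ)) ^ ((1:ℝ)/2)) ^ (4:ℕ) = (P.card:ℝ)^2 := by
      rw [← Real.rpow_natCast (((P.card:ℝ)) ^ ((1:ℝ)/2)) 4, ← Real.rpow_mul (by positivity)]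
      norm_num
    have hl4 : (((L.card:ℝ)) ^ ((3:ℝ)/4)) ^ (4:ℕ) = (L.card:ℝ)^3 := by
      rw [← Real.rpow_natCast (((L.card:ℝ)) ^ ((3:ℝ)/4)) 4, ← Real.rpow_mul (by positivity)]
      norm_num
    have hq4 : (((q:ℝ)) ^ ((1:ℝ)/4)) ^ (4:ℕ) = (q:ℝ) := by
      rw [← Real.rpow_natCast (((q:ℝ)) ^ ((1:ℝ)/4)) 4, ← Real.rpow_mul (by positivity)]
      norm_num
    have hX4 : (64 * C₁ * X)^(4:ℕ) =
        16777216 * C₁^4 * ((P.card:ℝ)^2 * (L.card:ℝ)^3 * (q:ℝ)) := by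
      rw [hX]
      rw [show (64 * C₁ * ((P.card:ℝ) ^ ((1:ℝ)/2) * (L.card:ℝ) ^ ((3:ℝ)/4) *
          (q:ℝ) ^ ((1:ℝ)/4)))^(4:ℕ) =
        64^(4:ℕ) * C₁^(4:ℕ) * ((((P.card:ℝ)) ^ ((1:ℝ)/2)) ^ (4:ℕ) *
          (((L.card:ℝ)) ^ ((3:ℝ)/4)) ^ (4:ℕ) * (((q:ℝ)) ^ ((1:ℝ)/4)) ^ (4:ℕ)) by ring]
      rw [hp4, hl4, hq4]
      norm_num
    rw [hX4]
    have hC14 : C₁ ≤ C₁^4 := le_self_pow₀ hC₁ (by norm_num)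
    have hnn : (0:ℝ) ≤ (P.card:ℝ)^2 * (L.card:ℝ)^3 * (q:ℝ) := by positivity
    calc (Ic:ℝ)^4 ≤ 4194304 * C₁ * (P.card:ℝ)^2 * (L.card:ℝ)^3 * q := hmain
      _ = 4194304 * C₁ * ((P.card:ℝ)^2 * (L.card:ℝ)^3 * (q:ℝ)) := by ring
      _ ≤ 16777216 * C₁^4 * ((P.card:ℝ)^2 * (L.card:ℝ)^3 * (q:ℝ)) := by nlinarith
  have hPnn : (0:ℝ) ≤ P.card := Nat.cast_nonneg _
  have hLnn : (0:ℝ) ≤ L.card := Nat.cast_nonneg _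
  nlinarith [mul_nonneg (le_trans zero_le_one hC₁) hXnn,
    mul_nonneg (le_trans zero_le_one hC₁) hPnn,
    mul_nonneg (le_trans zero_le_one hC₁) hLnn]
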